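/- Let K be a commutative ring, S = K[x_1,…,x_n], and φ: S → S a flat K-algebra homomorphism with φ(x_i) = s_i·x_i for elements s_i ∈ S. Then the top differential ∂_{n+1}: FK_{n+1} → FK_n of the φ-Koszul chain complex FK_•(x_1,…,x_n) is injective; equivalently, H_{n+1}(FK_•(x_1,…,x_n)) = 0. -/

import Mathlib

/-- The left skew polynomial ring `A[Θ;φ]`. -/
structure LeftSkewPolynomialRing (A : Type*) [CommRing A] (φ : A →+* A)
    (B : Type*) [Ring B] where
  ι : A →+* B
  θ : B
  theta_mul : ∀ a : A, θ * ι a = ι (φ a) * θ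
  basis : Function.Bijective fun f : ℕ →₀ A => f.sum fun i a => ι a * θ ^ i

noncomputable section

namespace PhiKoszul

variable {S : Type*} [CommRing S] {φ : S →+* S} {B : Type*} [Ring B] {n : ℕ}

/-- The left `B`-linear map `B → N` sending `b` to `b • v`. -/
def toSpan {N : Type*} [AddCommGroup N] [Module B N] (v : N) : B →ₗ[B] N where
  toFun b := b • v
  map_add' a b := add_smul a b v
  map_smul' a b := mul_smul a b v

/-- Extension of a family `s : Fin n → S` to `Fin (n+1)`, with value `1` at the last
index (which corresponds to the extra basis vector `u`). -/
def extOne (s : Fin n → S) (j : Fin (n + 1)) : S :=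
  if h : (j : ℕ) < n then s ⟨j, h⟩ else 1

/-- The degree-`l` term `FK_l` of the `φ`-Koszul complex: the free left
`S[Θ;φ]`-module on the `l`-element subsets of `{e_1, …, e_n, u}` (where `u`
corresponds to the last element of `Fin (n+1)`). -/
abbrev FK (B : Type*) [Ring B] (n l : ℕ) : Type _ :=
  {t : Finset (Fin (n + 1)) // t.card = l} →₀ B

/-- The coefficient with which the basis element `T \ {i}` occurs (up to sign) in the
image of the basis element `T` under the `φ`-Koszul differential: deleting `e_i` from a
wedge without `u` gives `x_i`; deleting `e_i` from a wedge with `u` gives `φ(x_i)`;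
deleting `u` gives `Θ - s_{j_1}⋯s_{j_{l-1}}`. -/
def coeff (sk : LeftSkewPolynomialRing S φ B) (x s : Fin n → S)
    (T : Finset (Fin (n + 1))) (i : Fin (n + 1)) : B :=
  if h : (i : ℕ) < n then
    (if Fin.last n ∈ T then sk.ι (φ (x ⟨i, h⟩)) else sk.ι (x ⟨i, h⟩))
  else sk.θ - sk.ι (∏ j ∈ T.erase (Fin.last n), extOne s j)

/-- The image of the basis element `T` under the `φ`-Koszul differential
`∂ : FK_{l+1} → FK_l`, namely `Σ_{i ∈ T} (-1)^{|{j ∈ T : j < i}|} coeff(T,i) • (T\{i})`. -/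
def tgt (sk : LeftSkewPolynomialRing S φ B) (x s : Fin n → S) (l : ℕ)
    (T : {t : Finset (Fin (n + 1)) // t.card = l + 1}) : FK B n l :=
  ∑ i ∈ T.1.attach,
    ((-1 : ℤ) ^ (T.1.filter fun j => j < i.1).card) •
      Finsupp.single
        ⟨T.1.erase i.1, by rw [Finset.card_erase_of_mem i.2, T.2]; rfl⟩
        (coeff sk x s T.1 i.1)

/-- The `φ`-Koszul differential `∂_{l+1} : FK_{l+1} → FK_l`, as a map of left
`S[Θ;φ]`-modules. -/
def FKd (sk : LeftSkewPolynomialRing S φ B) (x s : Fin n → S) (l : ℕ) :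
    FK B n (l + 1) →ₗ[B] FK B n l :=
  Finsupp.lsum ℕ fun T => toSpan (tgt sk x s l T)

end PhiKoszul

end

section Aux

variable {S : Type*} [CommRing S] {φ : S →+* S} {B : Type*} [Ring B]

theorem sk_theta_pow_mul (sk : LeftSkewPolynomialRing S φ B) (a : S) (i : ℕ) :
    sk.θ ^ i * sk.ι a = sk.ι (φ^[i] a) * sk.θ ^ i := by
  induction i generalizing a with
  | zero => simp
  | succ i ih =>
    rw [pow_succ, mul_assoc, sk.theta_mul, ← mul_assoc, ih, ← mul_assoc,
      ← Function.iterate_succ_apply]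

noncomputable def skLift (sk : LeftSkewPolynomialRing S φ B) : (ℕ →₀ S) →+ B :=
  Finsupp.liftAddHom fun i => (AddMonoidHom.mulRight (sk.θ ^ i)).comp sk.ι.toAddMonoidHom

theorem skLift_apply (sk : LeftSkewPolynomialRing S φ B) (f : ℕ →₀ S) :
    skLift sk f = f.sum fun i a => sk.ι a * sk.θ ^ i := rfl

theorem skLift_bij (sk : LeftSkewPolynomialRing S φ B) :
    Function.Bijective (skLift sk) := sk.basis

theorem skLift_mul (sk : LeftSkewPolynomialRing S φ B) (c : S) (f : ℕ →₀ S) :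
    skLift sk f * (sk.θ - sk.ι c) =
      skLift sk (f.sum fun i a =>
        Finsupp.single (i + 1) a - Finsupp.single i (a * φ^[i] c)) := by
  rw [map_finsuppSum, skLift_apply, Finsupp.sum_mul]
  refine Finsupp.sum_congr fun i _ => ?_
  rw [map_sub]
  rw [show skLift sk (Finsupp.single (i+1) (f i)) = sk.ι (f i) * sk.θ ^ (i+1) from
    Finsupp.liftAddHom_apply_single _ _ _]
  rw [show skLift sk (Finsupp.single i (f i * φ^[i] c)) = sk.ι (f i * φ^[i] c) * sk.θ ^ i from
    Finsupp.liftAddHom_apply_single _ _ _]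
  rw [mul_sub, mul_assoc (sk.ι (f i)) (sk.θ ^ i) (sk.ι c), sk_theta_pow_mul,
    ← mul_assoc, ← map_mul, pow_succ, ← mul_assoc]

theorem mul_theta_sub_eq_zero (sk : LeftSkewPolynomialRing S φ B) (c : S) {b : B}
    (h : b * (sk.θ - sk.ι c) = 0) : b = 0 := by
  obtain ⟨f, rfl⟩ := (skLift_bij sk).surjective b
  rw [skLift_mul] at h
  have hg : (f.sum fun i a =>
      Finsupp.single (i + 1) a - Finsupp.single i (a * φ^[i] c)) = 0 :=
    (skLift_bij sk).injective (by rw [h, map_zero])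
  suffices hf : f = 0 by rw [hf, map_zero]
  by_contra hf
  have hne : f.support.Nonempty := Finsupp.support_nonempty_iff.2 hf
  set d := f.support.max' hne with hd
  have hmem : d ∈ f.support := f.support.max'_mem hne
  have := congrArg (fun g : ℕ →₀ S => g (d + 1)) hg
  simp only [Finsupp.sum_apply, Finsupp.coe_zero, Pi.zero_apply, Finsupp.sub_apply,
    Finsupp.single_apply] at this
  rw [Finsupp.sum] at this
  have h1 : ∀ i ∈ f.support, ((if i + 1 = d + 1 then f i else 0)
      - (if i = d + 1 then f i * φ^[i] c else 0))
      = if i = d then f i else 0 := by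
    intro i hi
    have hle : i ≤ d := f.support.le_max' i hi
    rw [if_neg (show i ≠ d + 1 by omega), sub_zero]
    by_cases h : i = d
    · rw [if_pos (show i + 1 = d + 1 by omega), if_pos h]
    · rw [if_neg (show i + 1 ≠ d + 1 by omega), if_neg h]
  rw [Finset.sum_congr rfl h1, Finset.sum_ite_eq' f.support d fun i => f i,
    if_pos hmem] at this
  exact Finsupp.mem_support_iff.1 hmem this

end Aux


open PhiKoszul MvPolynomial

/-- Let `K` be a commutative ring, `S = K[x_1,…,x_n]`, and `φ : S → S` a flat
`K`-algebra homomorphism with `φ(x_i) = s_i·x_i`.  Then the top differential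
`∂_{n+1} : FK_{n+1} → FK_n` of the `φ`-Koszul chain complex is injective; equivalently,
`H_{n+1}(FK_•(x_1,…,x_n)) = 0`. -/
theorem phiKoszul_top_differential_injective
    {K : Type*} [CommRing K] {n : ℕ}
    (φ : MvPolynomial (Fin n) K →ₐ[K] MvPolynomial (Fin n) K)
    (hflat : (φ : MvPolynomial (Fin n) K →+* MvPolynomial (Fin n) K).Flat)
    (s : Fin n → MvPolynomial (Fin n) K)
    (hs : ∀ i, φ (X i) = s i * X i)
    {B : Type*} [Ring B]
    (sk : LeftSkewPolynomialRing (MvPolynomial (Fin n) K)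
      (φ : MvPolynomial (Fin n) K →+* MvPolynomial (Fin n) K) B) :
    Function.Injective (FKd sk X s n) := by
  classical
  rw [injective_iff_map_eq_zero]
  intro f hf
  set T0 : {t : Finset (Fin (n + 1)) // t.card = n + 1} := ⟨Finset.univ, by simp⟩ with hT0
  have huniq : ∀ T : {t : Finset (Fin (n + 1)) // t.card = n + 1}, T = T0 := by
    intro T
    exact Subtype.ext (Finset.eq_univ_of_card _ (by simp [T.2]))
  have hfs : f = Finsupp.single T0 (f T0) := by
    ext T
    rw [huniq T, Finsupp.single_eq_same]
  set b := f T0 with hb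
  rw [hfs] at hf
  have h1 : FKd sk X s n (Finsupp.single T0 b) = b • tgt sk X s n T0 := by
    simp [FKd, toSpan]
  rw [h1] at hf
  have hklast : (Finset.univ.erase (Fin.last n)).card = n := by
    rw [Finset.card_erase_of_mem (Finset.mem_univ _)]
    simp
  have herase : ∀ i : Fin (n + 1),
      Finset.univ.erase i = Finset.univ.erase (Fin.last n) ↔ i = Fin.last n := by
    intro i
    constructor
    · intro h
      by_contra hne
      have hm : i ∈ Finset.univ.erase (Fin.last n) :=
        Finset.mem_erase.2 ⟨hne, Finset.mem_univ i⟩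
      rw [← h] at hm
      exact (Finset.notMem_erase i _) hm
    · rintro rfl; rfl
  have h2 := congrArg
    (fun g : FK B n n => g ⟨Finset.univ.erase (Fin.last n), hklast⟩) hf
  simp only [tgt, Finsupp.smul_apply, smul_eq_mul, Finsupp.coe_zero, Pi.zero_apply,
    Finsupp.finset_sum_apply, Finsupp.single_apply, Subtype.mk.injEq, hT0, herase,
    smul_ite, smul_zero, Finset.mul_sum, mul_ite, mul_zero] at h2
  rw [Finset.sum_attach Finset.univ fun i : Fin (n + 1) =>
      if i = Fin.last n then
        b * (((-1 : ℤ) ^ (Finset.univ.filter fun j => j < i).card) •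
          PhiKoszul.coeff sk X s Finset.univ i) else 0,
    Finset.sum_ite_eq' Finset.univ (Fin.last n), if_pos (Finset.mem_univ _)] at h2
  have h3 : b * PhiKoszul.coeff sk X s Finset.univ (Fin.last n) = 0 := by
    rcases neg_one_pow_eq_or ℤ ((Finset.univ.filter fun j => j < Fin.last n).card) with h | h <;>
      rw [h] at h2
    · simpa using h2
    · simpa [neg_eq_zero] using h2
  have hco : PhiKoszul.coeff sk X s Finset.univ (Fin.last n) =
      sk.θ - sk.ι (∏ j ∈ Finset.univ.erase (Fin.last n), extOne s j) := by
    simp [PhiKoszul.coeff]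
  rw [hco] at h3
  have hb0 : b = 0 := mul_theta_sub_eq_zero sk _ h3
  rw [hfs, hb0, Finsupp.single_zero]
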